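/- Let 0 ≤ m−n ≤ c·√n for some constant c > 0, and consider a uniformly random lattice path with m up-steps and n down-steps. Then for every 1 ≤ k ≤ min(n/2, nm/(5(m−n)²)), the probability that the first return to level 0 occurs after exactly 2k steps is at least C/(k·√k) for some absolute constant C > 0 (independent of n, m, k). -/

import Mathlib

/-- The height (level) of the lattice path encoded by `f` (with `true` an up-step
and `false` a down-step) after the first `j` steps. -/
def height (N : ℕ) (f : Fin N → Bool) (j : ℕ) : ℤ :=
  ((Finset.univ.filter fun i : Fin N => i.1 < j ∧ f i = true).card : ℤ)
    - ((Finset.univ.filter fun i : Fin N => i.1 < j ∧ f i = false).card : ℤ)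

/-- The number of up-steps of the lattice path encoded by `f`. -/
def ups (N : ℕ) (f : Fin N → Bool) : ℕ :=
  (Finset.univ.filter fun i : Fin N => f i = true).card

/-- `4^j ≤ 2√j · C(2j, j)` for `j ≥ 1`. -/
lemma four_pow_le_sqrt_mul_centralBinom : ∀ j : ℕ, 1 ≤ j →
    (4 : ℝ) ^ j ≤ 2 * Real.sqrt j * (Nat.centralBinom j : ℝ) := by
  intro j
  induction j with
  | zero => omega
  | succ j ih =>
    intro _
    rcases Nat.eq_or_lt_of_le (Nat.one_le_iff_ne_zero.mpr (Nat.succ_ne_zero j)) with h | h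
    · obtain rfl : j = 0 := by omega
      norm_num [Nat.centralBinom]
    · have hj : 1 ≤ j := by omega
      have IH := ih hj
      have key := Nat.succ_mul_centralBinom_succ j
      have keyR : ((j : ℝ) + 1) * (Nat.centralBinom (j + 1) : ℝ)
          = 2 * (2 * j + 1) * (Nat.centralBinom j : ℝ) := by
        exact_mod_cast congrArg (Nat.cast : ℕ → ℝ) key
      set a := Real.sqrt j with ha
      set b := Real.sqrt (j + 1) with hb
      have ha2 : a ^ 2 = j := Real.sq_sqrt (by positivity)
      have hb2 : b ^ 2 = (j : ℝ) + 1 := by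
        rw [hb]
        push_cast
        exact Real.sq_sqrt (by positivity)
      have hapos : 0 < a := Real.sqrt_pos.mpr (by exact_mod_cast hj)
      have hbpos : 0 < b := Real.sqrt_pos.mpr (by positivity)
      -- key sqrt inequality: 2(j+1) a ≤ (2j+1) b
      have hsq : 2 * ((j : ℝ) + 1) * a ≤ (2 * j + 1) * b := by
        nlinarith [sq_nonneg ((2 * (j:ℝ) + 1) * b - 2 * ((j:ℝ)+1) * a), sq_nonneg (a - b),
          sq_nonneg (a + b), mul_pos hapos hbpos]
      have hcb : (0:ℝ) ≤ (Nat.centralBinom j : ℝ) := by positivity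
      have h1 : ((j:ℝ) + 1) * (4 : ℝ) ^ (j+1) ≤ ((j:ℝ)+1) * (2 * b * (Nat.centralBinom (j+1) : ℝ)) := by
        have expand : ((j:ℝ)+1) * (2 * b * (Nat.centralBinom (j+1) : ℝ))
            = 2 * b * (2 * (2 * j + 1) * (Nat.centralBinom j : ℝ)) := by
          rw [← keyR]; ring
        rw [expand, pow_succ]
        nlinarith [mul_le_mul_of_nonneg_left IH (le_of_lt hbpos), mul_pos hapos hbpos,
          mul_le_mul_of_nonneg_right hsq hcb]
      have := le_of_mul_le_mul_left (by
        calc ((j:ℝ)+1) * (4 : ℝ) ^ (j+1) ≤ ((j:ℝ)+1) * (2 * b * (Nat.centralBinom (j+1) : ℝ)) := h1) (by positivity : (0:ℝ) < (j:ℝ)+1)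
      calc (4:ℝ) ^ (j+1) ≤ 2 * b * (Nat.centralBinom (j+1) : ℝ) := this
        _ = 2 * Real.sqrt ((j:ℕ)+1 : ℕ) * (Nat.centralBinom (j+1) : ℝ) := by
            rw [hb]; push_cast; ring

lemma choose_two_step (a b : ℕ) :
    (a + 1) * (b + 1) * Nat.choose (a + b + 2) (a + 1)
      = (a + b + 1) * (a + b + 2) * Nat.choose (a + b) a := by
  have h1 : (a + b + 2) * Nat.choose (a + b + 1) a = Nat.choose (a + b + 2) (a + 1) * (a + 1) := by
    have := Nat.add_one_mul_choose_eq (a + b + 1) a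
    simpa [Nat.succ_eq_add_one] using this
  have h2 : (a + b + 1) * Nat.choose (a + b) a = Nat.choose (a + b + 1) (a + 1) * (a + 1) := by
    have := Nat.add_one_mul_choose_eq (a + b) a
    simpa [Nat.succ_eq_add_one] using this
  have h3 : Nat.choose (a + b + 1) (a + 1) * (a + 1) = Nat.choose (a + b + 1) a * (b + 1) := by
    have := Nat.choose_succ_right_eq (a + b + 1) a
    rw [this]
    congr 1
    omega
  calc (a + 1) * (b + 1) * Nat.choose (a + b + 2) (a + 1)
      = (b + 1) * (Nat.choose (a + b + 2) (a + 1) * (a + 1)) := by ring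
    _ = (b + 1) * ((a + b + 2) * Nat.choose (a + b + 1) a) := by rw [h1]
    _ = (a + b + 2) * (Nat.choose (a + b + 1) a * (b + 1)) := by ring
    _ = (a + b + 2) * (Nat.choose (a + b + 1) (a + 1) * (a + 1)) := by rw [h3]
    _ = (a + b + 2) * ((a + b + 1) * Nat.choose (a + b) a) := by rw [h2]
    _ = (a + b + 1) * (a + b + 2) * Nat.choose (a + b) a := by ring

/-- Key counting identity:
`C(m+n, n) · n^(k) · m^(k) = C(m+n-2k, n-k) · (m+n)^(2k)` (falling factorials). -/
lemma choose_descFactorial_identity : ∀ (k m n : ℕ), k ≤ n → n ≤ m →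
    (m + n).choose n * n.descFactorial k * m.descFactorial k
      = (m + n - 2 * k).choose (n - k) * (m + n).descFactorial (2 * k) := by
  intro k
  induction k with
  | zero => intro m n _ _; simp
  | succ k ih =>
    intro m n hk hnm
    have IH := ih m n (by omega) hnm
    obtain ⟨a, ha⟩ : ∃ a, n - k = a + 1 := ⟨n - k - 1, by omega⟩
    obtain ⟨b, hb⟩ : ∃ b, m - k = b + 1 := ⟨m - k - 1, by omega⟩
    have hs : m + n - 2 * k = a + b + 2 := by omega
    have hs' : m + n - (2 * k + 1 + 1) = a + b := by omega
    have ha' : n - (k + 1) = a := by omega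
    have key := choose_two_step a b
    have hMk : m + n - 2 * k ≤ m + n := by omega
    rw [Nat.descFactorial_succ, Nat.descFactorial_succ,
      show 2 * (k + 1) = (2 * k + 1) + 1 by ring, Nat.descFactorial_succ,
      Nat.descFactorial_succ, hs', ha']
    have lhs_eq : (m + n).choose n * ((n - k) * n.descFactorial k) * ((m - k) * m.descFactorial k)
        = (n - k) * (m - k) * ((m + n).choose n * n.descFactorial k * m.descFactorial k) := by ring
    rw [lhs_eq, IH, ha, hb]
    have h1 : m + n - (2 * k + 1) = a + b + 1 := by omega
    simp only [hs, hs', ha', h1]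
    calc (a + 1) * (b + 1) * ((a + b + 2).choose (a + 1) * (m + n).descFactorial (2 * k))
        = ((a + 1) * (b + 1) * (a + b + 2).choose (a + 1)) * (m + n).descFactorial (2 * k) := by
          ring
      _ = ((a + b + 1) * (a + b + 2) * (a + b).choose a) * (m + n).descFactorial (2 * k) := by
          rw [key]
      _ = (a + b).choose a * ((a + b + 1) * ((a + b + 2) * (m + n).descFactorial (2 * k))) := by
          ring

/-- Product estimate: `(1 - (m-n)²/m²)^k · (m+n)^(2k) ≤ 4^k · n^(k) · m^(k)`. -/
lemma descFactorial_prod_bound (m n : ℕ) (hnm : n ≤ m) (hn : 1 ≤ n) :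
    ∀ k : ℕ, 2 * k ≤ n →
    (1 - ((m : ℝ) - n) ^ 2 / (m : ℝ) ^ 2) ^ k * ((m + n).descFactorial (2 * k) : ℝ)
      ≤ 4 ^ k * (n.descFactorial k : ℝ) * (m.descFactorial k : ℝ) := by
  have hm1 : (1 : ℝ) ≤ (m : ℝ) := by exact_mod_cast hn.trans hnm
  have hd0 : (0 : ℝ) ≤ (m : ℝ) - n := by
    have : (n : ℝ) ≤ m := by exact_mod_cast hnm
    linarith
  set x : ℝ := ((m : ℝ) - n) ^ 2 / (m : ℝ) ^ 2 with hx
  have hx0 : 0 ≤ x := by positivity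
  have hx1 : x ≤ 1 := by
    rw [hx, div_le_one (by positivity)]
    have : (0 : ℝ) ≤ (n : ℝ) := by positivity
    nlinarith
  have hxm : x * (m : ℝ) ^ 2 = ((m : ℝ) - n) ^ 2 := by
    rw [hx]; exact div_mul_cancel₀ _ (pow_ne_zero 2 (by linarith : (0:ℝ) < m).ne')
  intro k
  induction k with
  | zero => simp
  | succ k ih =>
    intro hk
    have hk' : 2 * k ≤ n := by omega
    have IH := ih hk'
    -- cast equalities
    have e1 : ((m + n).descFactorial (2 * (k + 1)) : ℝ)
        = ((m : ℝ) + n - (2 * k + 1)) * (((m : ℝ) + n - 2 * k) * ((m + n).descFactorial (2 * k) : ℝ)) := by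
      rw [show 2 * (k + 1) = (2 * k + 1) + 1 by ring, Nat.descFactorial_succ,
        Nat.descFactorial_succ]
      push_cast [Nat.cast_sub (by omega : 2 * k + 1 ≤ m + n), Nat.cast_sub (by omega : 2 * k ≤ m + n)]
      ring
    have e2 : (n.descFactorial (k + 1) : ℝ) = ((n : ℝ) - k) * (n.descFactorial k : ℝ) := by
      rw [Nat.descFactorial_succ]
      push_cast [Nat.cast_sub (by omega : k ≤ n)]
      ring
    have e3 : (m.descFactorial (k + 1) : ℝ) = ((m : ℝ) - k) * (m.descFactorial k : ℝ) := by
      rw [Nat.descFactorial_succ]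
      push_cast [Nat.cast_sub (by omega : k ≤ m)]
      ring
    set s : ℝ := (m : ℝ) + n - 2 * k with hs
    have hsm : (m : ℝ) + 2 ≤ s := by
      have : (2 * k + 2 : ℝ) ≤ (n : ℝ) := by exact_mod_cast hk
      rw [hs]; linarith
    have key : (1 - x) * ((s - 1) * s) ≤ 4 * (((n : ℝ) - k) * ((m : ℝ) - k)) := by
      have h4 : 4 * (((n : ℝ) - k) * ((m : ℝ) - k)) = s ^ 2 - ((m : ℝ) - n) ^ 2 := by
        rw [hs]; ring
      rw [h4, ← hxm]
      nlinarith [mul_nonneg hx0 (by nlinarith : (0:ℝ) ≤ s ^ 2 - (m:ℝ)^2),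
        mul_nonneg (by linarith : (0:ℝ) ≤ 1 - x) (by linarith : (0:ℝ) ≤ s)]
    have hdF : (0 : ℝ) ≤ ((m + n).descFactorial (2 * k) : ℝ) := by positivity
    have hnn : (0 : ℝ) ≤ 4 ^ k * (n.descFactorial k : ℝ) * (m.descFactorial k : ℝ) := by positivity
    have h1x : (0 : ℝ) ≤ 1 - x := by linarith
    calc (1 - x) ^ (k + 1) * ((m + n).descFactorial (2 * (k + 1)) : ℝ)
        = ((1 - x) * ((s - 1) * s)) * ((1 - x) ^ k * ((m + n).descFactorial (2 * k) : ℝ)) := by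
          rw [e1, hs]; ring
      _ ≤ ((1 - x) * ((s - 1) * s)) * (4 ^ k * (n.descFactorial k : ℝ) * (m.descFactorial k : ℝ)) := by
          apply mul_le_mul_of_nonneg_left IH
          apply mul_nonneg h1x
          apply mul_nonneg (by linarith) (by linarith)
      _ ≤ (4 * (((n : ℝ) - k) * ((m : ℝ) - k))) * (4 ^ k * (n.descFactorial k : ℝ) * (m.descFactorial k : ℝ)) := by
          exact mul_le_mul_of_nonneg_right key hnn
      _ = 4 ^ (k + 1) * (n.descFactorial (k + 1) : ℝ) * (m.descFactorial (k + 1) : ℝ) := by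
          rw [e2, e3, pow_succ]; ring

lemma choose_ratio_lb (m n k : ℕ) (hnm : n ≤ m) (hk1 : 1 ≤ k) (hk : 2 * k ≤ n)
    (h5 : 5 * (k : ℝ) * ((m : ℝ) - n) ^ 2 ≤ (n : ℝ) * m) :
    (4 / 5 : ℝ) * ((m + n).choose n : ℝ) ≤ 4 ^ k * ((m + n - 2 * k).choose (n - k) : ℝ) := by
  have hn1 : 1 ≤ n := by omega
  have hm1 : (1 : ℝ) ≤ (m : ℝ) := by exact_mod_cast hn1.trans hnm
  set x : ℝ := ((m : ℝ) - n) ^ 2 / (m : ℝ) ^ 2 with hx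
  have hx0 : 0 ≤ x := by positivity
  have hk1' : (1 : ℝ) ≤ (k : ℝ) := by exact_mod_cast hk1
  have hnm' : (n : ℝ) ≤ (m : ℝ) := by exact_mod_cast hnm
  have hxm : x * (m : ℝ) ^ 2 = ((m : ℝ) - n) ^ 2 := by
    rw [hx]; exact div_mul_cancel₀ _ (pow_ne_zero 2 (by linarith : (0:ℝ) < m).ne')
  have hkx : (k : ℝ) * x ≤ 1 / 5 := by
    have h2 : (5 * ((k : ℝ) * x)) * (m : ℝ) ^ 2 ≤ 1 * (m : ℝ) ^ 2 := by nlinarith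
    have h3 := le_of_mul_le_mul_right h2 (by positivity : (0:ℝ) < (m : ℝ) ^ 2)
    linarith
  have hx15 : x ≤ 1 / 5 := by nlinarith
  have hbern : (4 / 5 : ℝ) ≤ (1 - x) ^ k := by
    have := one_add_mul_le_pow (a := -x) (by linarith) k
    have h' : 1 + (k : ℝ) * (-x) ≤ (1 - x) ^ k := by
      rw [sub_eq_add_neg]; exact this
    linarith
  have hprod := descFactorial_prod_bound m n hnm hn1 k hk
  have hid := choose_descFactorial_identity k m n (by omega) hnm
  have hidR : ((m + n).choose n : ℝ) * (n.descFactorial k : ℝ) * (m.descFactorial k : ℝ)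
      = ((m + n - 2 * k).choose (n - k) : ℝ) * ((m + n).descFactorial (2 * k) : ℝ) := by
    exact_mod_cast congrArg (Nat.cast : ℕ → ℝ) hid
  have hdFpos : (0 : ℝ) < ((m + n).descFactorial (2 * k) : ℝ) := by
    have : ¬ (m + n < 2 * k) := by omega
    have hne : (m + n).descFactorial (2 * k) ≠ 0 := fun hh => this (Nat.descFactorial_eq_zero_iff_lt.mp hh)
    exact_mod_cast Nat.pos_of_ne_zero hne
  rw [← mul_le_mul_iff_of_pos_right hdFpos]
  have hC : (0 : ℝ) ≤ ((m + n).choose n : ℝ) := by positivity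
  calc (4 / 5 : ℝ) * ((m + n).choose n : ℝ) * ((m + n).descFactorial (2 * k) : ℝ)
      = ((m + n).choose n : ℝ) * ((4 / 5 : ℝ) * ((m + n).descFactorial (2 * k) : ℝ)) := by ring
    _ ≤ ((m + n).choose n : ℝ) * ((1 - x) ^ k * ((m + n).descFactorial (2 * k) : ℝ)) := by
        apply mul_le_mul_of_nonneg_left _ hC
        exact mul_le_mul_of_nonneg_right hbern (le_of_lt hdFpos)
    _ ≤ ((m + n).choose n : ℝ) * (4 ^ k * (n.descFactorial k : ℝ) * (m.descFactorial k : ℝ)) := by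
        exact mul_le_mul_of_nonneg_left hprod hC
    _ = 4 ^ k * (((m + n).choose n : ℝ) * (n.descFactorial k : ℝ) * (m.descFactorial k : ℝ)) := by
        ring
    _ = 4 ^ k * ((m + n - 2 * k).choose (n - k) : ℝ) * ((m + n).descFactorial (2 * k) : ℝ) := by
        rw [hidR]; ring

/-- Bridge between `Finset.filter` counting on `Fin N` and `List.count` on prefixes. -/
lemma card_filter_eq_count_take (N : ℕ) (L : List Bool) (hL : L.length = N) (b : Bool) :
    ∀ j : ℕ, j ≤ N →
    (Finset.univ.filter fun i : Fin N => i.1 < j ∧ L.getD i.1 false = b).card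
      = (L.take j).count b := by
  intro j
  induction j with
  | zero => intro _; simp
  | succ j ih =>
    intro hj
    have hjN : j < N := hj
    have IH := ih (le_of_lt hjN)
    have htake : L.take (j + 1) = L.take j ++ [L.getD j false] := by
      rw [List.take_succ]
      congr 1
      rw [List.getD_eq_getElem?_getD, List.getElem?_eq_getElem (by omega)]
      rfl
    rw [htake, List.count_append]
    by_cases hb : L.getD j false = b
    · have hset : (Finset.univ.filter fun i : Fin N => i.1 < j + 1 ∧ L.getD i.1 false = b)
          = insert (⟨j, hjN⟩ : Fin N)
            (Finset.univ.filter fun i : Fin N => i.1 < j ∧ L.getD i.1 false = b) := by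
        ext i
        simp only [Finset.mem_filter, Finset.mem_insert, Finset.mem_univ, true_and]
        constructor
        · rintro ⟨h1, h2⟩
          rcases Nat.lt_succ_iff_lt_or_eq.mp h1 with h | h
          · exact Or.inr ⟨h, h2⟩
          · exact Or.inl (Fin.ext h)
        · rintro (rfl | ⟨h1, h2⟩)
          · exact ⟨Nat.lt_succ_self j, hb⟩
          · exact ⟨Nat.lt_succ_of_lt h1, h2⟩
      rw [hset, Finset.card_insert_of_notMem (by simp), IH, hb]
      simp
    · have hset : (Finset.univ.filter fun i : Fin N => i.1 < j + 1 ∧ L.getD i.1 false = b)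
          = (Finset.univ.filter fun i : Fin N => i.1 < j ∧ L.getD i.1 false = b) := by
        ext i
        simp only [Finset.mem_filter, Finset.mem_univ, true_and]
        constructor
        · rintro ⟨h1, h2⟩
          rcases Nat.lt_succ_iff_lt_or_eq.mp h1 with h | h
          · exact ⟨h, h2⟩
          · exact absurd h2 (by subst h; exact hb)
        · rintro ⟨h1, h2⟩
          exact ⟨Nat.lt_succ_of_lt h1, h2⟩
      rw [hset, IH, List.count_singleton']
      rw [List.getD_eq_getElem?_getD] at hb
      simp [hb]

/-- Encode a Dyck step as a `Bool`. -/
def stepBool : DyckStep → Bool := fun s => s = DyckStep.U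

lemma stepBool_injective : Function.Injective stepBool := by
  intro a b h
  cases a <;> cases b <;> simp [stepBool] at h ⊢

lemma count_map_stepBool (l : List DyckStep) :
    (l.map stepBool).count true = l.count DyckStep.U
      ∧ (l.map stepBool).count false = l.count DyckStep.D := by
  induction l with
  | nil => simp
  | cons a l ih =>
    cases a <;>
      simp [stepBool, List.count_cons, ih.1, ih.2]

lemma count_indicator (S : Finset ℕ) :
    ∀ R : ℕ, S ⊆ Finset.range R →
    ((List.range R).map fun t => decide (t ∈ S)).count true = S.card := by
  suffices h : ∀ R : ℕ,
      ((List.range R).map fun t => decide (t ∈ S)).count true = (S ∩ Finset.range R).card by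
    intro R hS
    rw [h R, Finset.inter_eq_left.mpr hS]
  intro R
  induction R with
  | zero => simp
  | succ R ih =>
    rw [List.range_succ, List.map_append, List.count_append, ih]
    by_cases hR : R ∈ S
    · have h1 : S ∩ Finset.range (R + 1) = insert R (S ∩ Finset.range R) := by
        ext x
        simp only [Finset.mem_inter, Finset.mem_range, Finset.mem_insert, Nat.lt_succ_iff_lt_or_eq]
        constructor
        · rintro ⟨hx, h | h⟩
          · exact Or.inr ⟨hx, h⟩
          · exact Or.inl h
        · rintro (rfl | ⟨hx, h⟩)
          · exact ⟨hR, Or.inr rfl⟩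
          · exact ⟨hx, Or.inl h⟩
      rw [h1, Finset.card_insert_of_notMem (by simp)]
      simp [hR]
    · have h1 : S ∩ Finset.range (R + 1) = S ∩ Finset.range R := by
        ext x
        simp only [Finset.mem_inter, Finset.mem_range, Nat.lt_succ_iff_lt_or_eq]
        constructor
        · rintro ⟨hx, h | h⟩
          · exact ⟨hx, h⟩
          · exact absurd hx (by subst h; exact hR)
        · rintro ⟨hx, h⟩
          exact ⟨hx, Or.inl h⟩
      rw [h1]
      simp [hR]

/-- The Boolean list encoding `U w D` followed by the indicator of `S` on `range R`. -/
def pathList (w : DyckWord) (S : Finset ℕ) (R : ℕ) : List Bool :=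
  true :: (w.toList.map stepBool ++ (false :: ((List.range R).map fun t => decide (t ∈ S))))

lemma pathList_length (w : DyckWord) (S : Finset ℕ) (R : ℕ) :
    (pathList w S R).length = 2 * w.semilength + 2 + R := by
  simp only [pathList, List.length_cons, List.length_append, List.length_map,
    List.length_range, ← w.two_mul_semilength_eq_length]
  omega

lemma pathList_take_small (w : DyckWord) (S : Finset ℕ) (R : ℕ) (t : ℕ)
    (ht : t ≤ w.toList.length) :
    (pathList w S R).take (t + 1) = true :: (w.toList.take t).map stepBool := by
  rw [pathList, List.take_succ_cons, List.take_append_of_le_length (by simpa using ht),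
    List.map_take]

lemma pathList_take_full (w : DyckWord) (S : Finset ℕ) (R : ℕ) :
    (pathList w S R).take (w.toList.length + 2)
      = true :: (w.toList.map stepBool ++ [false]) := by
  rw [pathList, List.take_succ_cons, List.take_append]
  rw [List.take_of_length_le (by simp), List.length_map]
  simp

lemma pathFun_mem (m n k : ℕ) (hk1 : 1 ≤ k) (hk : 2 * k ≤ n) (hnm : n ≤ m)
    (w : DyckWord) (hw : w.semilength = k - 1)
    (S : Finset ℕ) (hS : S ⊆ Finset.range (m + n - 2 * k)) (hScard : S.card = m - k) :
    ups (m + n) (fun i : Fin (m + n) => (pathList w S (m + n - 2 * k)).getD i.1 false) = m ∧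
    height (m + n) (fun i : Fin (m + n) => (pathList w S (m + n - 2 * k)).getD i.1 false)
      (2 * k) = 0 ∧
    ∀ j, 0 < j → j < 2 * k →
      height (m + n) (fun i : Fin (m + n) => (pathList w S (m + n - 2 * k)).getD i.1 false)
        j ≠ 0 := by
  set R := m + n - 2 * k with hR
  set L := pathList w S R with hLdef
  have hws : w.toList.length = 2 * k - 2 := by
    rw [← w.two_mul_semilength_eq_length, hw]; omega
  have hlen : L.length = m + n := by
    rw [hLdef, pathList_length, hw]; omega
  have bridge : ∀ j, j ≤ m + n → ∀ b : Bool,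
      (Finset.univ.filter fun i : Fin (m + n) => i.1 < j ∧ L.getD i.1 false = b).card
        = (L.take j).count b := fun j hj b => card_filter_eq_count_take (m + n) L hlen b j hj
  have hheight : ∀ j, j ≤ m + n →
      height (m + n) (fun i : Fin (m + n) => L.getD i.1 false) j
        = ((L.take j).count true : ℤ) - ((L.take j).count false : ℤ) := by
    intro j hj
    unfold height
    rw [bridge j hj true, bridge j hj false]
  have hcU : w.toList.count DyckStep.U = k - 1 := hw
  have hcD : w.toList.count DyckStep.D = k - 1 := by rw [← w.count_U_eq_count_D]; exact hw
  refine ⟨?_, ?_, ?_⟩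
  · -- ups
    unfold ups
    have hfe : (Finset.univ.filter fun i : Fin (m + n) => (L.getD i.1 false) = true)
        = (Finset.univ.filter fun i : Fin (m + n) => i.1 < m + n ∧ L.getD i.1 false = true) := by
      apply Finset.filter_congr
      intro i _
      simp [i.isLt]
    rw [hfe, bridge (m + n) le_rfl true, List.take_of_length_le (le_of_eq hlen)]
    rw [hLdef, pathList]
    simp only [List.count_cons, List.count_append, (count_map_stepBool w.toList).1,
      count_indicator S R hS]
    simp only [hcU, hScard]
    have : k ≤ m := by omega
    simp only [show (true == true) = true from rfl, show (true == false) = false from rfl]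
    simp
    omega
  · -- height at 2k
    have h2k : 2 * k = w.toList.length + 2 := by omega
    rw [hheight (2 * k) (by omega), h2k, hLdef, pathList_take_full]
    simp only [List.count_cons, List.count_append, (count_map_stepBool w.toList).1,
      (count_map_stepBool w.toList).2, hcU, hcD]
    simp
  · -- heights in between
    intro j hj0 hj2k
    obtain ⟨t, rfl⟩ : ∃ t, j = t + 1 := ⟨j - 1, by omega⟩
    have ht : t ≤ w.toList.length := by omega
    rw [hheight (t + 1) (by omega), hLdef, pathList_take_small w S R t ht]
    have hdyck := w.count_D_le_count_U t
    simp only [List.count_cons, (count_map_stepBool (w.toList.take t)).1,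
      (count_map_stepBool (w.toList.take t)).2]
    simp
    omega

lemma card_lower (m n k : ℕ) (hk1 : 1 ≤ k) (hk : 2 * k ≤ n) (hnm : n ≤ m) :
    catalan (k - 1) * Nat.choose (m + n - 2 * k) (m - k) ≤
      Nat.card {f : Fin (m + n) → Bool //
        ups (m + n) f = m ∧ height (m + n) f (2 * k) = 0 ∧
        ∀ j, 0 < j → j < 2 * k → height (m + n) f j ≠ 0} := by
  classical
  set R := m + n - 2 * k with hR
  set D := {w : DyckWord // w.semilength = k - 1} ×
    {S : Finset ℕ // S ∈ Finset.powersetCard (m - k) (Finset.range R)} with hD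
  have hmem : ∀ S : {S : Finset ℕ // S ∈ Finset.powersetCard (m - k) (Finset.range R)},
      S.1 ⊆ Finset.range R ∧ S.1.card = m - k := fun S => Finset.mem_powersetCard.mp S.2
  let Φ : D → {f : Fin (m + n) → Bool //
      ups (m + n) f = m ∧ height (m + n) f (2 * k) = 0 ∧
      ∀ j, 0 < j → j < 2 * k → height (m + n) f j ≠ 0} :=
    fun p => ⟨fun i => (pathList p.1.1 p.2.1 R).getD i.1 false,
      pathFun_mem m n k hk1 hk hnm p.1.1 p.1.2 p.2.1 (hmem p.2).1 (hmem p.2).2⟩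
  have hlenL : ∀ p : D, (pathList p.1.1 p.2.1 R).length = m + n := by
    intro p
    rw [pathList_length, p.1.2]
    omega
  have hinj : Function.Injective Φ := by
    intro p q h
    have hfun := congrArg Subtype.val h
    simp only [Φ] at hfun
    have hL : pathList p.1.1 p.2.1 R = pathList q.1.1 q.2.1 R := by
      apply List.ext_getElem (by rw [hlenL p, hlenL q])
      intro i h1 h2
      have hi : i < m + n := by rw [← hlenL p]; exact h1
      have := congrFun hfun ⟨i, hi⟩
      simpa [List.getD_eq_getElem?_getD, List.getElem?_eq_getElem, h1, h2] using this
    rw [pathList, pathList] at hL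
    have hL' := List.tail_eq_of_cons_eq hL
    have hlenmap : (p.1.1.toList.map stepBool).length = (q.1.1.toList.map stepBool).length := by
      simp only [List.length_map, ← DyckWord.two_mul_semilength_eq_length, p.1.2, q.1.2]
    obtain ⟨hmap, hrest⟩ := List.append_inj hL' hlenmap
    have hw : p.1 = q.1 := by
      apply Subtype.ext
      apply DyckWord.ext
      exact List.map_injective_iff.mpr stepBool_injective hmap
    have hrest' := List.tail_eq_of_cons_eq hrest
    have hSx : ∀ x, x < R → (decide (x ∈ p.2.1.1) = decide (x ∈ q.2.1.1)) := by
      intro x hx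
      have hxlen : x < ((List.range R).map fun t => decide (t ∈ p.2.1.1)).length := by
        simpa using hx
      have h4 := List.getElem_of_eq hrest' hxlen
      simpa using h4
    have hS : p.2 = q.2 := by
      apply Subtype.ext
      apply Finset.ext
      intro x
      by_cases hx : x < R
      · have := hSx x hx
        simpa [decide_eq_decide] using this
      · constructor
        · intro hmem'
          exact absurd (Finset.mem_range.mp ((hmem p.2).1 hmem')) hx
        · intro hmem'
          exact absurd (Finset.mem_range.mp ((hmem q.2).1 hmem')) hx
    exact Prod.ext hw hS
  have hcard : Nat.card D = catalan (k - 1) * Nat.choose R (m - k) := by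
    rw [Nat.card_eq_fintype_card, Fintype.card_prod,
      DyckWord.card_dyckWord_semilength_eq_catalan, Fintype.card_coe,
      Finset.card_powersetCard, Finset.card_range]
  calc catalan (k - 1) * Nat.choose (m + n - 2 * k) (m - k)
      = Nat.card D := hcard.symm
    _ ≤ _ := Nat.card_le_card_of_injective Φ hinj

/-- If `0 ≤ m - n ≤ c√n`, then for a uniformly random lattice path with `m` up-steps and `n`
down-steps and every `1 ≤ k ≤ min(n/2, nm/(5(m-n)²))`, the probability that the first
return to level `0` occurs after exactly `2k` steps is at least `C/(k√k)` for some
constant `C > 0` independent of `n`, `m`, `k`. -/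
theorem first_return_time_lower_bound (c : ℝ) (hc : 0 < c) :
    ∃ C : ℝ, 0 < C ∧ ∀ n m k : ℕ, n ≤ m →
      ((m : ℝ) - n) ≤ c * Real.sqrt n →
      1 ≤ k → 2 * k ≤ n →
      5 * (k : ℝ) * ((m : ℝ) - n) ^ 2 ≤ (n : ℝ) * m →
      C / ((k : ℝ) * Real.sqrt k) ≤
        (Nat.card {f : Fin (m + n) → Bool //
            ups (m + n) f = m ∧ height (m + n) f (2 * k) = 0 ∧
            ∀ j, 0 < j → j < 2 * k → height (m + n) f j ≠ 0} : ℝ)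
          / Nat.choose (m + n) n := by
  refine ⟨1 / 10, by norm_num, ?_⟩
  intro n m k hnm _ hk1 hk h5
  set T : ℝ := (Nat.card {f : Fin (m + n) → Bool //
      ups (m + n) f = m ∧ height (m + n) f (2 * k) = 0 ∧
      ∀ j, 0 < j → j < 2 * k → height (m + n) f j ≠ 0} : ℝ) with hT
  set CM : ℝ := ((m + n).choose n : ℝ) with hCM
  set Csm : ℝ := ((m + n - 2 * k).choose (n - k) : ℝ) with hCsm
  set ca : ℝ := (catalan (k - 1) : ℝ) with hca
  have hCMpos : (0 : ℝ) < CM := by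
    rw [hCM]
    exact_mod_cast Nat.choose_pos (by omega : n ≤ m + n)
  have hkR : (0 : ℝ) < (k : ℝ) := by exact_mod_cast hk1
  have hskR : (0 : ℝ) < Real.sqrt k := Real.sqrt_pos.mpr hkR
  have h4k : (0 : ℝ) < (4 : ℝ) ^ k := by positivity
  -- count lower bound
  have hsym : (m + n - 2 * k).choose (m - k) = (m + n - 2 * k).choose (n - k) := by
    rw [← Nat.choose_symm (show n - k ≤ m + n - 2 * k by omega)]
    congr 1
    omega
  have hcount : ca * Csm ≤ T := by
    rw [hT, hca, hCsm]
    have := card_lower m n k hk1 hk hnm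
    rw [hsym] at this
    exact_mod_cast this
  -- ratio lower bound
  have hratio := choose_ratio_lb m n k hnm hk1 hk h5
  have hCsmlb : (4 / 5 : ℝ) * CM / 4 ^ k ≤ Csm := by
    rw [div_le_iff₀ h4k]
    calc (4 / 5 : ℝ) * CM ≤ 4 ^ k * Csm := hratio
      _ = Csm * 4 ^ k := by ring
  -- catalan lower bound
  have hcatlb : (4 : ℝ) ^ (k - 1) / (2 * (k : ℝ) * Real.sqrt k) ≤ ca := by
    rcases Nat.eq_or_lt_of_le hk1 with h | h
    · rw [hca, ← h]
      norm_num [Real.sqrt_one, catalan]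
    · set j := k - 1 with hj
      have hj1 : 1 ≤ j := by omega
      have hcb := four_pow_le_sqrt_mul_centralBinom j hj1
      have hcat : ca * (k : ℝ) = (Nat.centralBinom j : ℝ) := by
        rw [hca]
        have : catalan j * (j + 1) = Nat.centralBinom j := by
          rw [catalan_eq_centralBinom_div, Nat.div_mul_cancel (Nat.succ_dvd_centralBinom j)]
        have hk' : ((j : ℝ) + 1) = (k : ℝ) := by
          have : j + 1 = k := by omega
          exact_mod_cast congrArg (Nat.cast : ℕ → ℝ) this
        rw [← hk']
        exact_mod_cast congrArg (Nat.cast : ℕ → ℝ) this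
      have hsjk : Real.sqrt j ≤ Real.sqrt k := Real.sqrt_le_sqrt (by exact_mod_cast Nat.sub_le k 1)
      have hca0 : (0 : ℝ) ≤ ca := by rw [hca]; positivity
      rw [div_le_iff₀ (by positivity)]
      calc (4 : ℝ) ^ j ≤ 2 * Real.sqrt j * (Nat.centralBinom j : ℝ) := hcb
        _ = 2 * Real.sqrt j * (ca * k) := by rw [hcat]
        _ ≤ 2 * Real.sqrt k * (ca * k) := by
            apply mul_le_mul_of_nonneg_right (by linarith) (by positivity)
        _ = ca * (2 * (k : ℝ) * Real.sqrt k) := by ring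
  -- combine
  have h4k1 : (4 : ℝ) ^ k = 4 ^ (k - 1) * 4 := by
    rw [← pow_succ]
    congr 1
    omega
  have hprod : (1 / 10 : ℝ) * CM / ((k : ℝ) * Real.sqrt k) ≤ ca * Csm := by
    have hmul : ((4 : ℝ) ^ (k - 1) / (2 * (k : ℝ) * Real.sqrt k)) * ((4 / 5 : ℝ) * CM / 4 ^ k)
        ≤ ca * Csm := by
      apply mul_le_mul hcatlb hCsmlb (by positivity) (by rw [hca]; positivity)
    calc (1 / 10 : ℝ) * CM / ((k : ℝ) * Real.sqrt k)
        = ((4 : ℝ) ^ (k - 1) / (2 * (k : ℝ) * Real.sqrt k)) * ((4 / 5 : ℝ) * CM / 4 ^ k) := by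
          rw [h4k1]
          field_simp
          ring
      _ ≤ ca * Csm := hmul
  rw [div_le_div_iff₀ (by positivity) hCMpos]
  have := (div_le_iff₀ (by positivity : (0:ℝ) < (k : ℝ) * Real.sqrt k)).mp hprod
  calc (1 / 10 : ℝ) * CM = (1 / 10 : ℝ) * CM := rfl
    _ ≤ ca * Csm * ((k : ℝ) * Real.sqrt k) := this
    _ ≤ T * ((k : ℝ) * Real.sqrt k) := by
        apply mul_le_mul_of_nonneg_right hcount (by positivity)
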